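/- Let r ≥ 1, N ≥ 2, and let A_1,…,A_N : U → M_r(ℂ) be holomorphic on a connected open set U ⊆ ℂ^N all of whose points have pairwise distinct coordinates, satisfying the Schlesinger equation. Then for each i the characteristic polynomial of A_i(t) is independent of t; in particular, the eigenvalues of each A_i (counted with multiplicity) are invariants of the Schlesinger flows (the coadjoint orbit invariants). -/

import Mathlib

open Matrix Finset

attribute [local instance] Matrix.normedAddCommGroup Matrix.normedSpace

variable {m : Type*} [Fintype m] [DecidableEq m]

/-- Matrix entry evaluation as a continuous linear map. -/
noncomputable def entryCLM (a b : m) : Matrix m m ℂ →L[ℂ] ℂ :=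
  LinearMap.toContinuousLinearMap
    { toFun := fun M => M a b
      map_add' := fun _ _ => rfl
      map_smul' := fun _ _ => rfl }

@[simp] lemma entryCLM_apply (a b : m) (M : Matrix m m ℂ) : entryCLM a b M = M a b := rfl

/-- Derivative of the determinant. -/
lemma hasFDerivAt_det' (M : Matrix m m ℂ) :
    HasFDerivAt Matrix.det
      (LinearMap.toContinuousLinearMap
        ((Matrix.traceLinearMap m ℂ ℂ) ∘ₗ (LinearMap.mulLeft ℂ (adjugate M)))) M := by
  have hprod : ∀ σ : Equiv.Perm m, HasFDerivAt (fun N : Matrix m m ℂ => ∏ i, N (σ i) i)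
      (∑ i, (∏ j ∈ univ.erase i, M (σ j) j) • entryCLM (σ i) i) M := by
    intro σ
    exact HasFDerivAt.finset_prod (fun i _ => (entryCLM (σ i) i).hasFDerivAt)
  have hsum : HasFDerivAt (fun N : Matrix m m ℂ => ∑ σ : Equiv.Perm m,
        ((Equiv.Perm.sign σ : ℤ) : ℂ) * ∏ i, N (σ i) i)
      (∑ σ : Equiv.Perm m, ((Equiv.Perm.sign σ : ℤ) : ℂ) •
        (∑ i, (∏ j ∈ univ.erase i, M (σ j) j) • entryCLM (σ i) i)) M :=
    HasFDerivAt.fun_sum (fun σ _ => (hprod σ).const_mul _)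
  have hdet : (Matrix.det : Matrix m m ℂ → ℂ) = fun N => ∑ σ : Equiv.Perm m,
      ((Equiv.Perm.sign σ : ℤ) : ℂ) * ∏ i, N (σ i) i := funext fun N => det_apply' N
  rw [hdet]
  refine hsum.congr_fderiv ?_
  ext H
  simp only [ContinuousLinearMap.coe_sum', Finset.sum_apply, ContinuousLinearMap.coe_smul',
    Pi.smul_apply, entryCLM_apply, smul_eq_mul, LinearMap.coe_toContinuousLinearMap',
    LinearMap.coe_comp, Function.comp_apply, LinearMap.mulLeft_apply,
    Matrix.traceLinearMap_apply]
  calc ∑ σ : Equiv.Perm m, ((Equiv.Perm.sign σ : ℤ) : ℂ) *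
        ∑ i, (∏ j ∈ univ.erase i, M (σ j) j) * H (σ i) i
      = ∑ i : m, ∑ σ : Equiv.Perm m, ((Equiv.Perm.sign σ : ℤ) : ℂ) *
        ((∏ j ∈ univ.erase i, M (σ j) j) * H (σ i) i) := by
        simp_rw [Finset.mul_sum]; exact Finset.sum_comm
    _ = ∑ i : m, (M.updateCol i fun k => H k i).det := by
        refine Finset.sum_congr rfl fun i _ => ?_
        rw [det_apply']
        refine Finset.sum_congr rfl fun σ _ => ?_
        have h1 : (M.updateCol i fun k => H k i) (σ i) i = H (σ i) i := by
          simp [Matrix.updateCol_apply]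
        have h2 : ∀ j ∈ univ.erase i,
            (M.updateCol i fun k => H k i) (σ j) j = M (σ j) j := fun j hj => by
          simp [Matrix.updateCol_apply, (Finset.mem_erase.1 hj).1]
        rw [← Finset.mul_prod_erase univ
            (fun j => (M.updateCol i fun k => H k i) (σ j) j) (Finset.mem_univ i),
          h1, Finset.prod_congr rfl h2]
        ring
    _ = ∑ i : m, (M.adjugate *ᵥ fun k => H k i) i := by
        refine Finset.sum_congr rfl fun i _ => ?_
        rw [← Matrix.cramer_apply, Matrix.cramer_eq_adjugate_mulVec]
    _ = (M.adjugate * H).trace := by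
        simp [Matrix.trace, Matrix.diag, Matrix.mul_apply, Matrix.mulVec, dotProduct]

/-- The adjugate of `x • 1 - P` commutes with `P`. -/
lemma adjugate_smul_one_sub_comm (x : ℂ) (P : Matrix m m ℂ) :
    adjugate (x • (1 : Matrix m m ℂ) - P) * P = P * adjugate (x • (1 : Matrix m m ℂ) - P) := by
  set M := x • (1 : Matrix m m ℂ) - P with hM
  have hP : P = x • (1 : Matrix m m ℂ) - M := by rw [hM]; abel
  have h1 : adjugate M * M = M * adjugate M := by rw [adjugate_mul, mul_adjugate]
  rw [hP, Matrix.mul_sub, Matrix.sub_mul, h1, Matrix.mul_smul, Matrix.smul_mul,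
    Matrix.mul_one, Matrix.one_mul]

lemma trace_adjugate_mul_commutator (x : ℂ) (P Q : Matrix m m ℂ) :
    ((adjugate (x • (1 : Matrix m m ℂ) - P)) * ⁅P, Q⁆).trace = 0 := by
  set B := adjugate (x • (1 : Matrix m m ℂ) - P) with hB
  have hcomm : B * P = P * B := adjugate_smul_one_sub_comm x P
  have : B * ⁅P, Q⁆ = (B * P) * Q - (B * Q) * P := by
    rw [Ring.lie_def, Matrix.mul_sub, ← Matrix.mul_assoc, ← Matrix.mul_assoc]
  rw [this, Matrix.trace_sub, hcomm, Matrix.mul_assoc, Matrix.trace_mul_comm,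
    Matrix.mul_assoc, sub_self]

lemma eval_charpoly' (M : Matrix m m ℂ) (x : ℂ) :
    M.charpoly.eval x = (x • (1 : Matrix m m ℂ) - M).det := by
  rw [Matrix.charpoly, ← Polynomial.coe_evalRingHom, RingHom.map_det]
  congr 1
  ext i j
  by_cases h : i = j
  · subst h
    simp [charmatrix_apply_eq, Matrix.one_apply]
  · simp [charmatrix_apply_ne _ _ _ h, Matrix.one_apply_ne h]

/-- A function with zero derivative on an open preconnected set is constant there. -/
lemma constOn_of_hasFDerivAt_zero {E G : Type*} [NormedAddCommGroup E] [NormedSpace ℂ E]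
    [NormedAddCommGroup G] [NormedSpace ℂ G] {U : Set E} (hUo : IsOpen U)
    (hUc : IsPreconnected U) {g : E → G} (hg : ∀ t ∈ U, HasFDerivAt g (0 : E →L[ℂ] G) t)
    {t t' : E} (ht : t ∈ U) (ht' : t' ∈ U) : g t = g t' := by
  letI : PreconnectedSpace U := Subtype.preconnectedSpace hUc
  have hf : IsLocallyConstant fun u : U => g u := by
    rw [IsLocallyConstant.iff_exists_open]
    rintro ⟨t0, ht0⟩
    obtain ⟨ε, hε, hball⟩ := Metric.isOpen_iff.1 hUo t0 ht0
    refine ⟨Subtype.val ⁻¹' Metric.ball t0 ε,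
      (Metric.isOpen_ball).preimage continuous_subtype_val, by simpa using hε, ?_⟩
    rintro ⟨y, hy⟩ hy'
    exact (convex_ball t0 ε).is_const_of_fderivWithin_eq_zero
      (fun z hz => ((hg z (hball hz)).differentiableAt).differentiableWithinAt)
      (fun z hz => by
        rw [fderivWithin_of_isOpen Metric.isOpen_ball hz, (hg z (hball hz)).fderiv])
      hy' (Metric.mem_ball_self hε)
  exact hf.apply_eq_of_preconnectedSpace ⟨t, ht⟩ ⟨t', ht'⟩

/-- **Coadjoint orbit invariants of the Schlesinger equation.**
If holomorphic `A₁,…,A_N : U → Mₙ(ℂ)` satisfy the Schlesinger equation on a connected open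
set `U ⊆ ℂ^N` whose points have pairwise distinct coordinates, then the characteristic
polynomial of each `A_i(t)` is independent of `t`; in particular the eigenvalues of each
`A_i` (with multiplicity) are invariants of the Schlesinger flows. -/
theorem schlesinger_charpoly_invariant
    (r N : ℕ) (hr : 1 ≤ r) (hN : 2 ≤ N)
    (U : Set (Fin N → ℂ)) (hUo : IsOpen U) (hUc : IsConnected U)
    (hUd : ∀ t ∈ U, ∀ i j : Fin N, i ≠ j → t i ≠ t j)
    (A : Fin N → (Fin N → ℂ) → Matrix (Fin r) (Fin r) ℂ)
    (hA : ∀ i, DifferentiableOn ℂ (A i) U)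
    (hSch : ∀ i j : Fin N, ∀ t ∈ U,
        (i ≠ j → fderiv ℂ (A i) t (Pi.single j 1)
            = (t i - t j)⁻¹ • ⁅A i t, A j t⁆) ∧
        fderiv ℂ (A i) t (Pi.single i 1)
            = -∑ k ∈ Finset.univ.erase i, (t i - t k)⁻¹ • ⁅A i t, A k t⁆) :
    ∀ i : Fin N, ∀ t ∈ U, ∀ t' ∈ U, (A i t).charpoly = (A i t').charpoly := by
  intro i t ht t' ht'
  apply Polynomial.funext
  intro x
  rw [eval_charpoly', eval_charpoly']
  refine constOn_of_hasFDerivAt_zero (g := fun s => (x • (1 : Matrix (Fin r) (Fin r) ℂ) - A i s).det)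
    hUo hUc.isPreconnected ?_ ht ht'
  intro s hs
  have hD : HasFDerivAt (A i) (fderiv ℂ (A i) s) s :=
    ((hA i).differentiableAt (hUo.mem_nhds hs)).hasFDerivAt
  have hM : HasFDerivAt (fun u => x • (1 : Matrix (Fin r) (Fin r) ℂ) - A i u)
      (-(fderiv ℂ (A i) s)) s := hD.const_sub _
  have h := (hasFDerivAt_det' (x • (1 : Matrix (Fin r) (Fin r) ℂ) - A i s)).comp s hM
  refine h.congr_fderiv ?_
  have key : ∀ j : Fin N,
      (adjugate (x • (1 : Matrix (Fin r) (Fin r) ℂ) - A i s) *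
        (fderiv ℂ (A i) s (Pi.single j 1))).trace = 0 := by
    intro j
    by_cases hij : i = j
    · subst hij
      rw [(hSch i i s hs).2]
      simp [Matrix.mul_neg, Matrix.mul_sum, Matrix.mul_smul, Matrix.trace_neg,
        Matrix.trace_sum, Matrix.trace_smul, trace_adjugate_mul_commutator]
    · rw [(hSch i j s hs).1 hij, Matrix.mul_smul, Matrix.trace_smul,
        trace_adjugate_mul_commutator, smul_zero]
  ext v
  have hv : v = ∑ j : Fin N, v j • (Pi.single j 1 : Fin N → ℂ) := by
    ext k
    simp [Pi.single_apply]
  simp only [ContinuousLinearMap.coe_comp', Function.comp_apply,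
    ContinuousLinearMap.neg_apply, LinearMap.coe_toContinuousLinearMap',
    LinearMap.coe_comp, LinearMap.mulLeft_apply, Matrix.traceLinearMap_apply,
    ContinuousLinearMap.zero_apply, Matrix.mul_neg, Matrix.trace_neg, neg_eq_zero]
  conv_lhs => rw [hv]
  rw [map_sum]
  simp [Matrix.mul_sum, Matrix.mul_smul, Matrix.trace_smul, key, ContinuousLinearMap.comp_apply]
  refine Finset.sum_eq_zero fun j _ => ?_
  refine mul_eq_zero_of_right _ ?_
  change (Matrix.traceLinearMap (Fin r) ℂ ℂ) ((x • (1 : Matrix (Fin r) (Fin r) ℂ) - A i s).adjugate * (-(fderiv ℂ (A i) s (Pi.single j 1)))) = 0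
  rw [Matrix.traceLinearMap_apply, Matrix.mul_neg, Matrix.trace_neg, key, neg_zero]
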